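/- There exists B > 0 such that for every b > B, the b-orbit h_b is strictly increasing on (0,∞) and lim_{x→∞} h_b(x) = ∞. -/

import Mathlib

open Real Set Filter Topology

/-- A global `C²` solution of equation (14), `h'' - coth(x) h' + sin(2h) = 0` on `(0,∞)`. -/
def SolvesEq14 (h : ℝ → ℝ) : Prop :=
  ContDiffOn ℝ 2 h (Set.Ioi 0) ∧
  ∀ x ∈ Set.Ioi (0:ℝ),
    deriv (deriv h) x - (Real.cosh x / Real.sinh x) * deriv h x + Real.sin (2 * h x) = 0

/-- The `b`-orbit: a global solution of equation (14) with `h(x)/x² → b` as `x → 0⁺`. -/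
def IsBOrbit (b : ℝ) (h : ℝ → ℝ) : Prop :=
  SolvesEq14 h ∧ Filter.Tendsto (fun x => h x / x ^ 2) (𝓝[>] (0:ℝ)) (𝓝 b)

namespace Lem4

variable {h : ℝ → ℝ} {b : ℝ}

lemma hcont (hS : SolvesEq14 h) : ContinuousOn h (Ioi 0) := hS.1.continuousOn

lemma hd1 (hS : SolvesEq14 h) {x : ℝ} (hx : x ∈ Ioi (0:ℝ)) :
    HasDerivAt h (deriv h x) x :=
  (((hS.1.differentiableOn (by norm_num)).differentiableAt
      (isOpen_Ioi.mem_nhds hx))).hasDerivAt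

lemma hcd1 (hS : SolvesEq14 h) : ContDiffOn ℝ 1 (deriv h) (Ioi 0) :=
  hS.1.deriv_of_isOpen isOpen_Ioi (by norm_num)

lemma hcont1 (hS : SolvesEq14 h) : ContinuousOn (deriv h) (Ioi 0) :=
  (hcd1 hS).continuousOn

lemma hd2 (hS : SolvesEq14 h) {x : ℝ} (hx : x ∈ Ioi (0:ℝ)) :
    HasDerivAt (deriv h)
      (Real.cosh x / Real.sinh x * deriv h x - Real.sin (2 * h x)) x := by
  have hdiff : DifferentiableAt ℝ (deriv h) x :=
    ((hcd1 hS).differentiableOn (by norm_num)).differentiableAt (isOpen_Ioi.mem_nhds hx)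
  have heq := hS.2 x hx
  have : deriv (deriv h) x = Real.cosh x / Real.sinh x * deriv h x - Real.sin (2 * h x) := by
    linarith
  exact this ▸ hdiff.hasDerivAt

/-- derivative of `g = h' / sinh`. -/
lemma gd (hS : SolvesEq14 h) {x : ℝ} (hx : x ∈ Ioi (0:ℝ)) :
    HasDerivAt (fun y => deriv h y / Real.sinh y)
      (-Real.sin (2 * h x) / Real.sinh x) x := by
  have hs : Real.sinh x ≠ 0 := ne_of_gt (Real.sinh_pos_iff.2 hx)
  have := (hd2 hS hx).div (Real.hasDerivAt_sinh x) hs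
  refine this.congr_deriv ?_
  field_simp
  ring

lemma deriv_eq_g_sinh {x : ℝ} (hx : (0:ℝ) < x) :
    deriv h x = (deriv h x / Real.sinh x) * Real.sinh x := by
  have hs : Real.sinh x ≠ 0 := ne_of_gt (Real.sinh_pos_iff.2 hx)
  field_simp

lemma h_to_zero (hlim : Tendsto (fun x => h x / x ^ 2) (𝓝[>] (0:ℝ)) (𝓝 b)) :
    Tendsto h (𝓝[>] (0:ℝ)) (𝓝 0) := by
  have hx2 : Tendsto (fun x : ℝ => x ^ 2) (𝓝[>] (0:ℝ)) (𝓝 0) := by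
    have := ((continuous_pow 2).tendsto (0:ℝ)).mono_left (nhdsWithin_le_nhds (s := Ioi 0))
    simpa using this
  have := hlim.mul hx2
  rw [mul_zero] at this
  refine this.congr' ?_
  filter_upwards [self_mem_nhdsWithin] with x hx
  have : (x:ℝ) ≠ 0 := ne_of_gt hx
  field_simp

lemma sinh_div_self_to_one :
    Tendsto (fun x : ℝ => Real.sinh x / x) (𝓝[>] (0:ℝ)) (𝓝 1) := by
  have h0 := (Real.hasDerivAt_sinh 0)
  rw [hasDerivAt_iff_tendsto_slope] at h0
  have hmono : 𝓝[>] (0:ℝ) ≤ 𝓝[≠] (0:ℝ) :=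
    nhdsWithin_mono 0 (fun x hx => ne_of_gt hx)
  have := h0.mono_left hmono
  rw [Real.cosh_zero] at this
  refine this.congr' ?_
  filter_upwards [self_mem_nhdsWithin] with x hx
  simp [slope_def_field, Real.sinh_zero]

theorem g_to_2b (hS : SolvesEq14 h)
    (hlim : Tendsto (fun x => h x / x ^ 2) (𝓝[>] (0:ℝ)) (𝓝 b)) :
    Tendsto (fun x => deriv h x / Real.sinh x) (𝓝[>] (0:ℝ)) (𝓝 (2*b)) := by
  have h0 : Tendsto h (𝓝[>] (0:ℝ)) (𝓝 0) := h_to_zero hlim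
  have hsinh1 := sinh_div_self_to_one
  set g : ℝ → ℝ := fun y => deriv h y / Real.sinh y with hg
  have hev : ∀ᶠ x in 𝓝[>] (0:ℝ), |h x| ≤ (|b|+1) * x^2 := by
    have h1 : ∀ᶠ x in 𝓝[>] (0:ℝ), |h x / x^2 - b| < 1 :=
      Metric.tendsto_nhds.1 hlim 1 one_pos
    filter_upwards [h1, self_mem_nhdsWithin] with x hx hx0
    have hx0' : (0:ℝ) < x := hx0
    have hx2 : (0:ℝ) < x ^ 2 := by positivity
    have : |h x / x ^ 2| ≤ |b| + 1 := by
      calc |h x / x^2| = |h x / x^2 - b + b| := by ring_nf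
        _ ≤ |h x / x^2 - b| + |b| := abs_add_le _ _
        _ ≤ |b| + 1 := by linarith
    calc |h x| = |h x / x^2| * x^2 := by
          rw [abs_div, abs_of_pos hx2]; field_simp
      _ ≤ (|b|+1) * x^2 := by nlinarith
  obtain ⟨δ, hδ, hδsub⟩ := mem_nhdsGT_iff_exists_Ioc_subset.1 hev
  rw [mem_Ioi] at hδ
  set C : ℝ := 2*(|b|+1)*δ with hC
  have hC0 : (0:ℝ) ≤ C := by positivity
  have hbound : ∀ x ∈ Ioc (0:ℝ) δ, ‖-Real.sin (2 * h x) / Real.sinh x‖₊ ≤ C.toNNReal := by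
    intro x hx
    have hx0 : 0 < x := hx.1
    have hsp : 0 < Real.sinh x := Real.sinh_pos_iff.2 hx0
    have hxs : x ≤ Real.sinh x := le_of_lt (Real.self_lt_sinh_iff.2 hx0)
    have hhb : |h x| ≤ (|b|+1) * x^2 := hδsub hx
    rw [← NNReal.coe_le_coe, coe_nnnorm, Real.coe_toNNReal _ hC0]
    rw [norm_div, norm_neg]
    have h1 : ‖Real.sin (2 * h x)‖ ≤ 2 * |h x| := by
      have := Real.abs_sin_le_abs (x := 2 * h x)
      rw [abs_mul] at this
      simpa [Real.norm_eq_abs] using this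
    have h2 : ‖Real.sinh x‖ = Real.sinh x := by
      rw [Real.norm_eq_abs, abs_of_pos hsp]
    rw [h2]
    rw [div_le_iff₀ hsp]
    calc ‖Real.sin (2 * h x)‖ ≤ 2 * |h x| := h1
      _ ≤ 2 * ((|b|+1) * x^2) := by linarith [abs_nonneg (h x)]
      _ = (2*(|b|+1)*x) * x := by ring
      _ ≤ (2*(|b|+1)*δ) * Real.sinh x := by
          have hxδ : x ≤ δ := hx.2
          have : (2*(|b|+1)*x) * x ≤ (2*(|b|+1)*δ) * x := by
            nlinarith [abs_nonneg b, mul_nonneg (sub_nonneg.2 hxδ) hx0.le]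
          have h3 : (2*(|b|+1)*δ) * x ≤ (2*(|b|+1)*δ) * Real.sinh x := by
            nlinarith [abs_nonneg b]
          linarith
  have hlip : LipschitzOnWith C.toNNReal g (Ioc 0 δ) := by
    apply Convex.lipschitzOnWith_of_nnnorm_hasDerivWithin_le
      (f' := fun x => -Real.sin (2 * h x) / Real.sinh x) (convex_Ioc 0 δ)
    · intro x hx
      exact (gd hS hx.1).hasDerivWithinAt
    · exact hbound
  obtain ⟨G, hGlip, hGeq⟩ := hlip.extend_real
  have hgG : Tendsto g (𝓝[>] (0:ℝ)) (𝓝 (G 0)) := by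
    have : Tendsto G (𝓝[>] (0:ℝ)) (𝓝 (G 0)) :=
      (hGlip.continuous.tendsto 0).mono_left nhdsWithin_le_nhds
    refine this.congr' ?_
    filter_upwards [Ioc_mem_nhdsGT hδ] with x hx
    exact (hGeq hx).symm
  have hlhop : Tendsto (fun x => h x / x ^ 2) (𝓝[>] (0:ℝ)) (𝓝 (G 0 / 2)) := by
    apply HasDerivAt.lhopital_zero_nhdsGT
      (f' := fun x => deriv h x) (g' := fun x : ℝ => 2*x)
    · filter_upwards [self_mem_nhdsWithin] with x hx
      exact hd1 hS hx
    · filter_upwards [self_mem_nhdsWithin] with x hx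
      simpa using (hasDerivAt_pow 2 x)
    · filter_upwards [self_mem_nhdsWithin] with x hx
      have : (0:ℝ) < x := hx
      positivity
    · exact h0
    · have := ((continuous_pow 2).tendsto (0:ℝ)).mono_left
        (nhdsWithin_le_nhds (s := Ioi (0:ℝ)))
      simpa using this
    · have hmul : Tendsto (fun x => g x * (Real.sinh x / x) / 2) (𝓝[>] (0:ℝ))
          (𝓝 (G 0 * 1 / 2)) := (hgG.mul hsinh1).div_const 2
      rw [mul_one] at hmul
      refine hmul.congr' ?_
      filter_upwards [self_mem_nhdsWithin] with x hx
      have hx0 : (0:ℝ) < x := hx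
      have hsp : Real.sinh x ≠ 0 := ne_of_gt (Real.sinh_pos_iff.2 hx0)
      have hx0' : x ≠ 0 := ne_of_gt hx0
      simp only [hg]
      field_simp
  have : b = G 0 / 2 := tendsto_nhds_unique hlim hlhop
  have h2b : 2*b = G 0 := by rw [this]; ring
  rw [h2b]
  exact hgG

lemma cosh_quad {t : ℝ} (ht0 : 0 ≤ t) (ht : t ≤ 2/5) :
    Real.cosh t - 1 ≤ (2/3) * t^2 := by
  have h1 : Real.cosh t ≤ Real.exp (t^2/2) := Real.cosh_le_exp_half_sq t
  set u : ℝ := t^2/2 with hu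
  have hu0 : 0 ≤ u := by positivity
  have hu8 : u ≤ 1/8 := by nlinarith
  have hexp8 : Real.exp (1/8) < 4/3 := by
    have this : Real.exp (1:ℝ) = Real.exp (1/8) ^ 8 := by
      rw [← Real.exp_nat_mul]; norm_num
    have he : Real.exp (1:ℝ) < 2.7182818286 := Real.exp_one_lt_d9
    have hlt : Real.exp (1/8) ^ 8 < (4/3 : ℝ) ^ 8 := by
      rw [← this]; nlinarith
    exact lt_of_pow_lt_pow_left₀ 8 (by norm_num) hlt
  have hexpu : Real.exp u ≤ 4/3 := by
    calc Real.exp u ≤ Real.exp (1/8) := Real.exp_le_exp.2 hu8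
      _ ≤ 4/3 := hexp8.le
  have hkey : Real.exp u - 1 ≤ u * Real.exp u := by
    have h1' := Real.add_one_le_exp (-u)
    rw [Real.exp_neg] at h1'
    have hep := Real.exp_pos u
    have h2 : (-u+1) * Real.exp u ≤ (Real.exp u)⁻¹ * Real.exp u :=
      mul_le_mul_of_nonneg_right h1' hep.le
    rw [inv_mul_cancel₀ hep.ne'] at h2
    nlinarith
  have : Real.cosh t - 1 ≤ u * Real.exp u := by linarith
  calc Real.cosh t - 1 ≤ u * Real.exp u := this
    _ ≤ u * (4/3) := by nlinarith
    _ = (2/3) * t^2 := by rw [hu]; ring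


theorem est (hb : 0 < b) (hS : SolvesEq14 h)
    (h0 : Tendsto h (𝓝[>] (0:ℝ)) (𝓝 0))
    (g2b : Tendsto (fun y => deriv h y / Real.sinh y) (𝓝[>] (0:ℝ)) (𝓝 (2*b)))
    {x : ℝ} (hx : x ∈ Ioc (0:ℝ) (2/5))
    (hlow : ∀ t, 0 < t → t < x → b ≤ deriv h t / Real.sinh t ∧ deriv h t / Real.sinh t ≤ 3*b) :
    |deriv h x / Real.sinh x - 2*b| ≤ (16/25)*b := by
  obtain ⟨hx0, hx25⟩ := hx
  have hIoc_sub : Ioc (0:ℝ) x ⊆ Ioi 0 := fun t ht => ht.1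
  -- pointwise bounds for h on Ioc 0 x
  have hbnd : ∀ t ∈ Ioc (0:ℝ) x,
      b * (Real.cosh t - 1) ≤ h t ∧ h t ≤ 3*b*(Real.cosh t - 1) := by
    have hu : MonotoneOn (fun t => 3*b*(Real.cosh t - 1) - h t) (Ioc 0 x) := by
      apply monotoneOn_of_deriv_nonneg (convex_Ioc 0 x)
      · exact ((continuous_const.mul
          (Real.continuous_cosh.sub continuous_const)).continuousOn).sub
          ((hcont hS).mono hIoc_sub)
      · rw [interior_Ioc]
        intro t ht
        exact ((((Real.hasDerivAt_cosh t).sub_const 1).const_mul (3*b)).sub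
          (hd1 hS ht.1)).differentiableAt.differentiableWithinAt
      · rw [interior_Ioc]
        intro t ht
        have hder : HasDerivAt (fun t => 3*b*(Real.cosh t - 1) - h t)
            (3*b*Real.sinh t - deriv h t) t :=
          (((Real.hasDerivAt_cosh t).sub_const 1).const_mul (3*b)).sub (hd1 hS ht.1)
        rw [hder.deriv]
        have hsp : 0 < Real.sinh t := Real.sinh_pos_iff.2 ht.1
        have hgle : deriv h t / Real.sinh t ≤ 3*b := (hlow t ht.1 ht.2).2
        have := deriv_eq_g_sinh (h := h) ht.1
        nlinarith
    have hv : MonotoneOn (fun t => h t - b*(Real.cosh t - 1)) (Ioc 0 x) := by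
      apply monotoneOn_of_deriv_nonneg (convex_Ioc 0 x)
      · exact ((hcont hS).mono hIoc_sub).sub ((continuous_const.mul
          (Real.continuous_cosh.sub continuous_const)).continuousOn)
      · rw [interior_Ioc]
        intro t ht
        exact ((hd1 hS ht.1).sub
          (((Real.hasDerivAt_cosh t).sub_const 1).const_mul b)).differentiableAt.differentiableWithinAt
      · rw [interior_Ioc]
        intro t ht
        have hder : HasDerivAt (fun t => h t - b*(Real.cosh t - 1))
            (deriv h t - b*Real.sinh t) t :=
          (hd1 hS ht.1).sub (((Real.hasDerivAt_cosh t).sub_const 1).const_mul b)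
        rw [hder.deriv]
        have hsp : 0 < Real.sinh t := Real.sinh_pos_iff.2 ht.1
        have hgle : b ≤ deriv h t / Real.sinh t := (hlow t ht.1 ht.2).1
        have := deriv_eq_g_sinh (h := h) ht.1
        nlinarith
    have hcosh0 : Tendsto (fun t : ℝ => Real.cosh t - 1) (𝓝[>] (0:ℝ)) (𝓝 0) := by
      have h1c : Continuous (fun t : ℝ => Real.cosh t - 1) :=
        Real.continuous_cosh.sub continuous_const
      have := (h1c.tendsto (0:ℝ)).mono_left (nhdsWithin_le_nhds (s := Ioi (0:ℝ)))
      simpa using this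
    intro t ht
    constructor
    · -- lower bound via v
      have hv0 : Tendsto (fun t => h t - b*(Real.cosh t - 1)) (𝓝[>] (0:ℝ)) (𝓝 0) := by
        have := h0.sub (hcosh0.const_mul b)
        simpa using this
      have hev : ∀ᶠ s in 𝓝[>] (0:ℝ), h s - b*(Real.cosh s - 1) ≤ h t - b*(Real.cosh t - 1) := by
        filter_upwards [Ioc_mem_nhdsGT ht.1] with s hs
        exact hv ⟨hs.1, hs.2.trans ht.2⟩ ht hs.2
      have := le_of_tendsto hv0 hev
      linarith
    · -- upper bound via u
      have hu0 : Tendsto (fun t => 3*b*(Real.cosh t - 1) - h t) (𝓝[>] (0:ℝ)) (𝓝 0) := by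
        have := (hcosh0.const_mul (3*b)).sub h0
        simpa using this
      have hev : ∀ᶠ s in 𝓝[>] (0:ℝ),
          3*b*(Real.cosh s - 1) - h s ≤ 3*b*(Real.cosh t - 1) - h t := by
        filter_upwards [Ioc_mem_nhdsGT ht.1] with s hs
        exact hu ⟨hs.1, hs.2.trans ht.2⟩ ht hs.2
      have := le_of_tendsto hu0 hev
      linarith
  -- derivative bound for g on Ioc 0 x
  have hbound : ∀ t ∈ Ioc (0:ℝ) x, ‖-Real.sin (2 * h t) / Real.sinh t‖ ≤ 4*b*x := by
    intro t ht
    have ht0 : 0 < t := ht.1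
    have hsp : 0 < Real.sinh t := Real.sinh_pos_iff.2 ht0
    have hts : t ≤ Real.sinh t := (Real.self_lt_sinh_iff.2 ht0).le
    have hch : Real.cosh t - 1 ≤ (2/3) * t^2 := cosh_quad ht0.le (ht.2.trans hx25)
    have hh := hbnd t ht
    have hh0 : 0 ≤ h t := by nlinarith [Real.one_le_cosh t]
    have hhle : h t ≤ 2*b*t^2 := by nlinarith
    have hsin : |Real.sin (2 * h t)| ≤ 2 * h t := by
      have := Real.abs_sin_le_abs (x := 2 * h t)
      rwa [abs_of_nonneg (by linarith : (0:ℝ) ≤ 2 * h t)] at this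
    rw [norm_div, norm_neg, Real.norm_eq_abs, Real.norm_eq_abs, abs_of_pos hsp,
      div_le_iff₀ hsp]
    have htx : t ≤ x := ht.2
    calc |Real.sin (2 * h t)| ≤ 2 * h t := hsin
      _ ≤ 4*b*t^2 := by linarith
      _ = (4*b*t) * t := by ring
      _ ≤ (4*b*x) * t :=
        mul_le_mul_of_nonneg_right (by nlinarith) ht0.le
      _ ≤ (4*b*x) * Real.sinh t :=
        mul_le_mul_of_nonneg_left hts (by nlinarith)
  -- MVT estimate against the limit at 0⁺
  have hkey : ∀ s ∈ Ioc (0:ℝ) x,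
      ‖deriv h x / Real.sinh x - deriv h s / Real.sinh s‖ ≤ (16/25)*b := by
    intro s hs
    have := Convex.norm_image_sub_le_of_norm_hasDerivWithin_le
      (f := fun y => deriv h y / Real.sinh y)
      (f' := fun t => -Real.sin (2 * h t) / Real.sinh t)
      (fun t ht => (gd hS ht.1).hasDerivWithinAt) hbound (convex_Ioc 0 x)
      hs ⟨hx0, le_refl x⟩
    have hxs : ‖x - s‖ ≤ x := by
      rw [Real.norm_eq_abs, abs_of_nonneg (by linarith [hs.2] : (0:ℝ) ≤ x - s)]
      linarith [hs.1]
    calc ‖deriv h x / Real.sinh x - deriv h s / Real.sinh s‖ ≤ (4*b*x) * ‖x - s‖ := this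
      _ ≤ (4*b*x) * x :=
        mul_le_mul_of_nonneg_left hxs (by nlinarith)
      _ ≤ (16/25)*b := by
        have hx2 : x*x ≤ 4/25 := by nlinarith
        nlinarith [mul_le_mul_of_nonneg_left hx2 (by linarith : (0:ℝ) ≤ 4*b)]
  have habs : Tendsto (fun s => ‖deriv h x / Real.sinh x - deriv h s / Real.sinh s‖)
      (𝓝[>] (0:ℝ)) (𝓝 ‖deriv h x / Real.sinh x - 2*b‖) :=
    (tendsto_const_nhds.sub g2b).norm
  have hle := le_of_tendsto habs (by
    filter_upwards [Ioc_mem_nhdsGT hx0] with s hs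
    exact hkey s hs)
  rwa [Real.norm_eq_abs] at hle

theorem boot (hb : 0 < b) (hS : SolvesEq14 h)
    (h0 : Tendsto h (𝓝[>] (0:ℝ)) (𝓝 0))
    (g2b : Tendsto (fun y => deriv h y / Real.sinh y) (𝓝[>] (0:ℝ)) (𝓝 (2*b))) :
    ∀ x ∈ Ioc (0:ℝ) (2/5),
      b < deriv h x / Real.sinh x ∧ deriv h x / Real.sinh x < 3*b := by
  have hmem : Ioo b (3*b) ∈ 𝓝 (2*b) := Ioo_mem_nhds (by linarith) (by linarith)
  have hev := g2b hmem
  obtain ⟨δ', hδ', hsub'⟩ := mem_nhdsGT_iff_exists_Ioc_subset.1 hev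
  rw [mem_Ioi] at hδ'
  set δ := min δ' (2/5 : ℝ) with hδdef
  have hδ0 : 0 < δ := lt_min hδ' (by norm_num)
  have hδsub : ∀ t ∈ Ioc (0:ℝ) δ, deriv h t / Real.sinh t ∈ Ioo b (3*b) := fun t ht =>
    hsub' ⟨ht.1, ht.2.trans (min_le_left _ _)⟩
  intro x hx
  by_contra hcon
  have hxIoo : deriv h x / Real.sinh x ∉ Ioo b (3*b) := by
    intro hmem'
    exact hcon ⟨hmem'.1, hmem'.2⟩
  have hxδ : δ < x := by
    by_contra hle
    push_neg at hle
    exact hxIoo (hδsub x ⟨hx.1, hle⟩)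
  set A := Icc δ (2/5 : ℝ) ∩ (fun t => deriv h t / Real.sinh t) ⁻¹' (Ioo b (3*b))ᶜ with hA
  have hxA : x ∈ A := ⟨⟨hxδ.le, hx.2⟩, hxIoo⟩
  have hgc : ContinuousOn (fun t => deriv h t / Real.sinh t) (Icc δ (2/5 : ℝ)) := by
    apply ContinuousOn.div ((hcont1 hS).mono ?_) Real.continuous_sinh.continuousOn ?_
    · intro t ht
      exact lt_of_lt_of_le hδ0 ht.1
    · intro t ht
      exact ne_of_gt (Real.sinh_pos_iff.2 (lt_of_lt_of_le hδ0 ht.1))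
  have hclosed : IsClosed A :=
    hgc.preimage_isClosed_of_isClosed isClosed_Icc isOpen_Ioo.isClosed_compl
  have hbdd : BddBelow A := (bddBelow_Icc : BddBelow (Icc δ ((2:ℝ)/5))).mono inter_subset_left
  have hmA : sInf A ∈ A := hclosed.csInf_mem ⟨x, hxA⟩ hbdd
  set m := sInf A with hm
  have hm0 : 0 < m := lt_of_lt_of_le hδ0 hmA.1.1
  have hm25 : m ≤ 2/5 := hmA.1.2
  have hlow : ∀ t, 0 < t → t < m →
      b ≤ deriv h t / Real.sinh t ∧ deriv h t / Real.sinh t ≤ 3*b := by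
    intro t ht0 htm
    rcases le_or_gt t δ with hle | hlt
    · have := hδsub t ⟨ht0, hle⟩
      exact ⟨this.1.le, this.2.le⟩
    · have htA : t ∉ A := fun htA' => absurd (csInf_le hbdd htA') (not_le.2 htm)
      have htIcc : t ∈ Icc δ (2/5 : ℝ) := ⟨hlt.le, htm.le.trans hm25⟩
      have : deriv h t / Real.sinh t ∈ Ioo b (3*b) := by
        by_contra hno
        exact htA ⟨htIcc, hno⟩
      exact ⟨this.1.le, this.2.le⟩
  have hest := est hb hS h0 g2b ⟨hm0, hm25⟩ hlow
  rw [abs_le] at hest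
  have : deriv h m / Real.sinh m ∈ Ioo b (3*b) := by
    constructor
    · nlinarith [hest.1]
    · nlinarith [hest.2]
  exact hmA.2 this

lemma E_hasDeriv (hS : SolvesEq14 h) {x : ℝ} (hx : x ∈ Ioi (0:ℝ)) :
    HasDerivAt (fun y => (deriv h y)^2/2 + Real.sin (h y)^2)
      (Real.cosh x / Real.sinh x * (deriv h x)^2) x := by
  have h1 : HasDerivAt (fun y => (deriv h y)^2/2)
      (((2:ℕ) * deriv h x ^ 1 * (Real.cosh x / Real.sinh x * deriv h x - Real.sin (2 * h x)))/2)
      x := ((hd2 hS hx).pow 2).div_const 2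
  have h2 : HasDerivAt (fun y => Real.sin (h y)^2)
      ((2:ℕ) * Real.sin (h x) ^ 1 * (Real.cos (h x) * deriv h x)) x := by
    have hs : HasDerivAt (fun y => Real.sin (h y)) (Real.cos (h x) * deriv h x) x :=
      (Real.hasDerivAt_sin (h x)).comp x (hd1 hS hx)
    exact hs.pow 2
  have := h1.add h2
  refine this.congr_deriv ?_
  rw [Real.sin_two_mul]
  push_cast
  ring

lemma E_mono (hS : SolvesEq14 h) :
    MonotoneOn (fun y => (deriv h y)^2/2 + Real.sin (h y)^2) (Ioi (0:ℝ)) := by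
  apply monotoneOn_of_deriv_nonneg (convex_Ioi 0)
  · exact (((hcont1 hS).pow 2).div_const 2).add
      ((Real.continuous_sin.comp_continuousOn (hcont hS)).pow 2)
  · rw [interior_Ioi]
    exact fun t ht => (E_hasDeriv hS ht).differentiableAt.differentiableWithinAt
  · rw [interior_Ioi]
    intro t ht
    rw [(E_hasDeriv hS ht).deriv]
    have h1 : 0 < Real.sinh t := Real.sinh_pos_iff.2 ht
    have h2 : 0 < Real.cosh t := Real.cosh_pos t
    positivity

end Lem4

/-- **Lemma 4.** If `b` is sufficiently large then the `b`-orbit increases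
monotonically to `∞`. -/
theorem large_b_orbits_increase_to_infinity :
    ∃ B > (0:ℝ), ∀ b : ℝ, B < b → ∀ h : ℝ → ℝ, IsBOrbit b h →
      StrictMonoOn h (Ioi 0) ∧ Filter.Tendsto h Filter.atTop Filter.atTop := by
  refine ⟨10, by norm_num, ?_⟩
  intro b hb h hOrb
  obtain ⟨hS, hlim⟩ := hOrb
  have hb0 : (0:ℝ) < b := by linarith
  have h0 : Tendsto h (𝓝[>] (0:ℝ)) (𝓝 0) := Lem4.h_to_zero hlim
  have g2b := Lem4.g_to_2b hS hlim
  have gb := Lem4.boot hb0 hS h0 g2b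
  -- h' > 0 on (0, 2/5]
  have hd' : ∀ x ∈ Ioc (0:ℝ) (2/5), 0 < deriv h x := by
    intro x hx
    have h1 := (gb x hx).1
    have hsp : 0 < Real.sinh x := Real.sinh_pos_iff.2 hx.1
    have := Lem4.deriv_eq_g_sinh (h := h) hx.1
    nlinarith
  set E : ℝ → ℝ := fun y => (deriv h y)^2/2 + Real.sin (h y)^2 with hE
  have hEmono := Lem4.E_mono hS
  have hx₀ : ((2:ℝ)/5) ∈ Ioc (0:ℝ) (2/5) := ⟨by norm_num, le_refl _⟩
  have hd₀ : (2/5)*b < deriv h (2/5) := by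
    have h1 := (gb (2/5) hx₀).1
    have hss : (2/5 : ℝ) < Real.sinh (2/5) := Real.self_lt_sinh_iff.2 (by norm_num)
    have := Lem4.deriv_eq_g_sinh (h := h) (by norm_num : (0:ℝ) < 2/5)
    nlinarith
  have hE₀ : 2*b^2/25 ≤ E (2/5) := by
    have hsq : ((2/5)*b)^2 ≤ (deriv h (2/5))^2 := by nlinarith
    have hs2 : 0 ≤ Real.sin (h (2/5))^2 := sq_nonneg _
    simp only [hE]
    nlinarith
  have hE8 : (8:ℝ) < 2*b^2/25 := by nlinarith
  -- h'^2 ≥ 14 for x ≥ 2/5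
  have key : ∀ x, 2/5 ≤ x → (14:ℝ) ≤ (deriv h x)^2 := by
    intro x hxge
    have hx0 : (0:ℝ) < x := lt_of_lt_of_le (by norm_num) hxge
    have hEE : E (2/5) ≤ E x := hEmono (by norm_num : ((2:ℝ)/5) ∈ Ioi (0:ℝ))
      (mem_Ioi.2 hx0) hxge
    have hs1 : Real.sin (h x)^2 ≤ 1 := Real.sin_sq_le_one (h x)
    simp only [hE] at hEE
    nlinarith
  -- h' > 0 for x ≥ 2/5
  have pos : ∀ x, 2/5 ≤ x → 0 < deriv h x := by
    intro x hxge
    rcases eq_or_lt_of_le hxge with heq | hlt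
    · exact heq ▸ hd' (2/5) hx₀
    · by_contra hle
      push_neg at hle
      have hcont' : ContinuousOn (deriv h) (Icc (2/5 : ℝ) x) :=
        (Lem4.hcont1 hS).mono (fun t ht => lt_of_lt_of_le (by norm_num) ht.1)
      have h0mem : (0:ℝ) ∈ Icc (deriv h x) (deriv h (2/5)) :=
        ⟨hle, le_of_lt (lt_trans (by nlinarith : (0:ℝ) < (2/5)*b) hd₀)⟩
      obtain ⟨c, hc, hc0⟩ := intermediate_value_Icc' hxge hcont' h0mem
      have := key c hc.1
      rw [hc0] at this
      norm_num at this
  have derivpos : ∀ x ∈ Ioi (0:ℝ), 0 < deriv h x := by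
    intro x hx
    rcases le_or_gt x (2/5) with hle | hlt
    · exact hd' x ⟨hx, hle⟩
    · exact pos x hlt.le
  constructor
  · exact strictMonoOn_of_deriv_pos (convex_Ioi 0) (Lem4.hcont hS)
      (by rw [interior_Ioi]; exact derivpos)
  · -- h x ≥ x + C for x ≥ 2/5
    have ge1 : ∀ x, 2/5 ≤ x → 1 ≤ deriv h x := by
      intro x hxge
      have h1 := key x hxge
      have h2 := pos x hxge
      nlinarith
    have hsub : Ici ((2:ℝ)/5) ⊆ Ioi (0:ℝ) := fun t ht => lt_of_lt_of_le (by norm_num : (0:ℝ) < 2/5) ht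
    have hφ : MonotoneOn (fun x => h x - x) (Ici ((2:ℝ)/5)) := by
      apply monotoneOn_of_deriv_nonneg (convex_Ici _)
      · exact ((Lem4.hcont hS).mono hsub).sub continuousOn_id
      · rw [interior_Ici]
        intro t ht
        have ht0 : t ∈ Ioi (0:ℝ) := hsub (mem_Ici.2 (le_of_lt ht))
        exact ((Lem4.hd1 hS ht0).sub (hasDerivAt_id' t)).differentiableAt.differentiableWithinAt
      · rw [interior_Ici]
        intro t ht
        have ht0 : t ∈ Ioi (0:ℝ) := hsub (mem_Ici.2 (le_of_lt ht))
        rw [(show HasDerivAt (fun x => h x - x) (deriv h t - 1) t from (Lem4.hd1 hS ht0).sub (hasDerivAt_id' t)).deriv]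
        have := ge1 t (le_of_lt ht)
        linarith
    apply tendsto_atTop_mono' atTop (f₁ := fun x => x + (h (2/5) - 2/5))
    · filter_upwards [eventually_ge_atTop ((2:ℝ)/5)] with x hx
      have := hφ (self_mem_Ici) (mem_Ici.2 hx) hx
      simp only at this
      linarith
    · exact tendsto_atTop_add_const_right atTop _ tendsto_id
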